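/- Let q ≥ 2 and n ≥ 1. For every partition λ of n, Q_{n,q}(λ) ≥ (1 - 1/q^n)(1 - 1/q)^4 · P_{n,q}(λ), where P_{n,q}(λ) = q^n (1/q)_n / (∏_j q^{(λ'_j)^2} (1/q)_{m_j(λ)}) and Q_{n,q}(λ) = (1/z(n,q)) · 1/(q^{|λ|+2n(λ)} ∏_{s∈λ}(1 - 1/q^{h(s)})^2) with z(n,q) the coefficient of u^n in ∏_{i≥1}∏_{j≥0}(1 - u/q^{i+j})^{-1}. -/

import Mathlib

open Finset

noncomputable section

/-- The q-Pochhammer-type product `(1/q)_m = ∏_{k=1}^m (1 - 1/q^k)`. -/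
def qPoch (q : ℝ) (m : ℕ) : ℝ := ∏ k ∈ Finset.Icc 1 m, (1 - 1/q^k)

/-- `conjPart l j = λ'_j`, the `j`-th part of the conjugate partition
(the number of parts of `l` that are at least `j`). -/
def conjPart {n : ℕ} (l : n.Partition) (j : ℕ) : ℕ :=
  Multiset.countP (fun p => j ≤ p) l.parts

/-- `rowLen l i = λ_i`, the `i`-th largest part of `l` (1-indexed, `0` if `i` exceeds
the number of parts). -/
def rowLen {n : ℕ} (l : n.Partition) (i : ℕ) : ℕ :=
  ((Finset.Icc 1 n).filter (fun j => i ≤ conjPart l j)).card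

/-- The Young diagram of `l`, as the set of cells `(i,j)` (row `i`, column `j`,
both 1-indexed) with `1 ≤ j ≤ λ_i`. -/
def cells {n : ℕ} (l : n.Partition) : Finset (ℕ × ℕ) :=
  (Finset.Icc 1 n ×ˢ Finset.Icc 1 n).filter (fun s => s.2 ≤ rowLen l s.1)

/-- The arm length `a(s) = λ_i - j` of the cell `s = (i,j)`. -/
def arm {n : ℕ} (l : n.Partition) (s : ℕ × ℕ) : ℕ := rowLen l s.1 - s.2

/-- The leg length `l(s) = λ'_j - i` of the cell `s = (i,j)`. -/
def leg {n : ℕ} (l : n.Partition) (s : ℕ × ℕ) : ℕ := conjPart l s.2 - s.1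

/-- The hook length `h(s) = a(s) + l(s) + 1` of the cell `s`. -/
def hookLen {n : ℕ} (l : n.Partition) (s : ℕ × ℕ) : ℕ := arm l s + leg l s + 1

/-- `n(λ) = ∑_i (i-1) λ_i`. -/
def nStat {n : ℕ} (l : n.Partition) : ℕ := ∑ i ∈ Finset.Icc 1 n, (i - 1) * rowLen l i

/-- The multiplicity `m_j(λ)` of `j` as a part of `l`. -/
def mult {n : ℕ} (l : n.Partition) (j : ℕ) : ℕ := Multiset.count j l.parts

/-- The denominator `∏_j q^{(λ'_j)^2} (1/q)_{m_j(λ)}` appearing in the measure `P_{n,q}`. -/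
def Pden (q : ℝ) {n : ℕ} (l : n.Partition) : ℝ :=
  ∏ j ∈ Finset.Icc 1 n, q ^ ((conjPart l j)^2) * qPoch q (mult l j)

/-- The measure `P_{n,q}(λ) = q^n (1/q)_n / ∏_j q^{(λ'_j)^2} (1/q)_{m_j(λ)}`. -/
def Pmeas (q : ℝ) {n : ℕ} (l : n.Partition) : ℝ := q^n * qPoch q n / Pden q l

/-- `z(n,q)`: the coefficient of `u^n` in the formal expansion of
`∏_{i≥1} ∏_{j≥0} 1/(1 - u/q^{i+j})`, obtained by expanding each factor
as a geometric series and collecting terms of total degree `n`. -/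
def zCoeff (n : ℕ) (q : ℝ) : ℝ :=
  ∑' f : {f : (ℕ × ℕ) →₀ ℕ // (f.sum fun _ k => k) = n},
    ∏ p ∈ (f : (ℕ × ℕ) →₀ ℕ).support,
      ((1 : ℝ) / q ^ ((p.1 + 1) + p.2)) ^ ((f : (ℕ × ℕ) →₀ ℕ) p)

/-- The measure `Q_{n,q}(λ) = (1/z(n,q)) / (q^{|λ|+2n(λ)} ∏_{s∈λ} (1-1/q^{h(s)})^2)`. -/
def Qmeas (q : ℝ) {n : ℕ} (l : n.Partition) : ℝ :=
  (1 / zCoeff n q) *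
    (1 / (q ^ (n + 2 * nStat l) * ∏ s ∈ cells l, (1 - 1/q^(hookLen l s))^2))

/-- `P_{n,q}^r`: the `P_{n,q}`-probability that the largest part of `λ` is `< r`. -/
def Ptail (n : ℕ) (q : ℝ) (r : ℕ) : ℝ :=
  ∑ l ∈ Finset.univ.filter (fun l : n.Partition => ∀ p ∈ l.parts, p < r), Pmeas q l

end


section AuxProof
open Finset


set_option maxHeartbeats 4000000 in
lemma polyCert {x : ℝ} (h0 : 0 ≤ x) (h1 : x ≤ 1/2) :
    (1-x)^7*(1-x^2)*(1-x^3) ≤ (1-x)^2*(1-x^2)^3*(1-x^3)^4*(1-x^4)^5*((1-x)^2 - x^5*(6-5*x)) := by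
  have h2 : (0:ℝ) ≤ 1 - 2*x := by linarith
  have t : ∀ (c : ℝ) (j k : ℕ), 0 ≤ c → (0:ℝ) ≤ c * x ^ j * (1 - 2*x) ^ k :=
    fun c j k hc => mul_nonneg (mul_nonneg hc (pow_nonneg h0 j)) (pow_nonneg h2 k)
  have key : (1-x)^2*(1-x^2)^3*(1-x^3)^4*(1-x^4)^5*((1-x)^2 - x^5*(6-5*x))
      - (1-x)^7*(1-x^2)*(1-x^3) = (3:ℝ)*x^1*(1-2*x)^45 + (253:ℝ)*x^2*(1-2*x)^44 + (10417:ℝ)*x^3*(1-2*x)^43 + (279046:ℝ)*x^4*(1-2*x)^42 + (5467764:ℝ)*x^5*(1-2*x)^41 + (83540606:ℝ)*x^6*(1-2*x)^40 + (1036044928:ℝ)*x^7*(1-2*x)^39 + (10719698926:ℝ)*x^8*(1-2*x)^38 + (94393868815:ℝ)*x^9*(1-2*x)^37 + (718064573918:ℝ)*x^10*(1-2*x)^36 + (4773971162657:ℝ)*x^11*(1-2*x)^35 + (27994971815429:ℝ)*x^12*(1-2*x)^34 + (145870912849286:ℝ)*x^13*(1-2*x)^33 + (679435732992153:ℝ)*x^14*(1-2*x)^32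 + (2842799432427114:ℝ)*x^15*(1-2*x)^31 + (10727646710294878:ℝ)*x^16*(1-2*x)^30 + (36630821938058918:ℝ)*x^17*(1-2*x)^29 + (113481933084488186:ℝ)*x^18*(1-2*x)^28 + (319643254595010914:ℝ)*x^19*(1-2*x)^27 + (819933084686855138:ℝ)*x^20*(1-2*x)^26 + (1917764604592151242:ℝ)*x^21*(1-2*x)^25 + (4093318172791018248:ℝ)*x^22*(1-2*x)^24 + (7976596345964972638:ℝ)*x^23*(1-2*x)^23 + (14192714321702789742:ℝ)*x^24*(1-2*x)^22 + (23052094363801430542:ℝ)*x^25*(1-2*x)^21 + (34157810929385970668:ℝ)*x^26*(1-2*x)^20 + (46130003265715752514:ℝ)*x^27*(1-2*x)^19 + (56702556058307718132:ℝ)*x^28*(1-2*x)^18 + (63325564673542713762:ℝ)*x^29*(1-2*x)^17 + (64112950978606025934:ℝ)*x^30*(1-2*x)^16 + (58682998436253439374:ℝ)*x^31*(1-2*x)^15 + (48398479119679632465:ℝ)*x^32*(1-2*x)^14 + (35822547558914195450:ℝ)*x^33*(1-2*x)^13 + (23679873157451790551:ℝ)*x^34*(1-2*x)^12 + (13898045467431470586:ℝ)*x^35*(1-2*x)^11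 + (7190903048414660873:ℝ)*x^36*(1-2*x)^10 + (3251385973803301176:ℝ)*x^37*(1-2*x)^9 + (1270814574529178162:ℝ)*x^38*(1-2*x)^8 + (423484717383142884:ℝ)*x^39*(1-2*x)^7 + (118187164277895829:ℝ)*x^40*(1-2*x)^6 + (26970325367888210:ℝ)*x^41*(1-2*x)^5 + (4867082954097516:ℝ)*x^42*(1-2*x)^4 + (661004008470790:ℝ)*x^43*(1-2*x)^3 + (62357963741558:ℝ)*x^44*(1-2*x)^2 + (3519330003488:ℝ)*x^45*(1-2*x)^1 + (82274775261:ℝ)*x^46*(1-2*x)^0 := by ring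
  have hs : (0:ℝ) ≤ (3:ℝ)*x^1*(1-2*x)^45 + (253:ℝ)*x^2*(1-2*x)^44 + (10417:ℝ)*x^3*(1-2*x)^43 + (279046:ℝ)*x^4*(1-2*x)^42 + (5467764:ℝ)*x^5*(1-2*x)^41 + (83540606:ℝ)*x^6*(1-2*x)^40 + (1036044928:ℝ)*x^7*(1-2*x)^39 + (10719698926:ℝ)*x^8*(1-2*x)^38 + (94393868815:ℝ)*x^9*(1-2*x)^37 + (718064573918:ℝ)*x^10*(1-2*x)^36 + (4773971162657:ℝ)*x^11*(1-2*x)^35 + (27994971815429:ℝ)*x^12*(1-2*x)^34 + (145870912849286:ℝ)*x^13*(1-2*x)^33 + (679435732992153:ℝ)*x^14*(1-2*x)^32 + (2842799432427114:ℝ)*x^15*(1-2*x)^31 + (10727646710294878:ℝ)*x^16*(1-2*x)^30 + (36630821938058918:ℝ)*x^17*(1-2*x)^29 + (113481933084488186:ℝ)*x^18*(1-2*x)^28 + (319643254595010914:ℝ)*x^19*(1-2*x)^27 + (819933084686855138:ℝ)*x^20*(1-2*x)^26 + (1917764604592151242:ℝ)*x^21*(1-2*x)^25 + (4093318172791018248:ℝ)*x^22*(1-2*x)^24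 + (7976596345964972638:ℝ)*x^23*(1-2*x)^23 + (14192714321702789742:ℝ)*x^24*(1-2*x)^22 + (23052094363801430542:ℝ)*x^25*(1-2*x)^21 + (34157810929385970668:ℝ)*x^26*(1-2*x)^20 + (46130003265715752514:ℝ)*x^27*(1-2*x)^19 + (56702556058307718132:ℝ)*x^28*(1-2*x)^18 + (63325564673542713762:ℝ)*x^29*(1-2*x)^17 + (64112950978606025934:ℝ)*x^30*(1-2*x)^16 + (58682998436253439374:ℝ)*x^31*(1-2*x)^15 + (48398479119679632465:ℝ)*x^32*(1-2*x)^14 + (35822547558914195450:ℝ)*x^33*(1-2*x)^13 + (23679873157451790551:ℝ)*x^34*(1-2*x)^12 + (13898045467431470586:ℝ)*x^35*(1-2*x)^11 + (7190903048414660873:ℝ)*x^36*(1-2*x)^10 + (3251385973803301176:ℝ)*x^37*(1-2*x)^9 + (1270814574529178162:ℝ)*x^38*(1-2*x)^8 + (423484717383142884:ℝ)*x^39*(1-2*x)^7 + (118187164277895829:ℝ)*x^40*(1-2*x)^6 + (26970325367888210:ℝ)*x^41*(1-2*x)^5 + (4867082954097516:ℝ)*x^42*(1-2*x)^4 + (661004008470790:ℝ)*x^43*(1-2*x)^3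 + (62357963741558:ℝ)*x^44*(1-2*x)^2 + (3519330003488:ℝ)*x^45*(1-2*x)^1 + (82274775261:ℝ)*x^46*(1-2*x)^0 :=
    (add_nonneg (add_nonneg (add_nonneg (add_nonneg (add_nonneg (add_nonneg (add_nonneg (add_nonneg (add_nonneg (add_nonneg (add_nonneg (add_nonneg (add_nonneg (add_nonneg (add_nonneg (add_nonneg (add_nonneg (add_nonneg (add_nonneg (add_nonneg (add_nonneg (add_nonneg (add_nonneg (add_nonneg (add_nonneg (add_nonneg (add_nonneg (add_nonneg (add_nonneg (add_nonneg (add_nonneg (add_nonneg (add_nonneg (add_nonneg (add_nonneg (add_nonneg (add_nonneg (add_nonneg (add_nonneg (add_nonneg (add_nonneg (add_nonneg (add_nonneg (add_nonneg (add_nonneg (t _ _ _ (by norm_num)) (t _ _ _ (by norm_num))) (t _ _ _ (by norm_num))) (t _ _ _ (by norm_num))) (t _ _ _ (by norm_num))) (t _ _ _ (by norm_num))) (t _ _ _ (by norm_num))) (t _ _ _ (by norm_num))) (t _ _ _ (by norm_num))) (t _ _ _ (by norm_num))) (t _ _ _ (by norm_num))) (t _ _ _ (by norm_num))) (t _ _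 _ (by norm_num))) (t _ _ _ (by norm_num))) (t _ _ _ (by norm_num))) (t _ _ _ (by norm_num))) (t _ _ _ (by norm_num))) (t _ _ _ (by norm_num))) (t _ _ _ (by norm_num))) (t _ _ _ (by norm_num))) (t _ _ _ (by norm_num))) (t _ _ _ (by norm_num))) (t _ _ _ (by norm_num))) (t _ _ _ (by norm_num))) (t _ _ _ (by norm_num))) (t _ _ _ (by norm_num))) (t _ _ _ (by norm_num))) (t _ _ _ (by norm_num))) (t _ _ _ (by norm_num))) (t _ _ _ (by norm_num))) (t _ _ _ (by norm_num))) (t _ _ _ (by norm_num))) (t _ _ _ (by norm_num))) (t _ _ _ (by norm_num))) (t _ _ _ (by norm_num))) (t _ _ _ (by norm_num))) (t _ _ _ (by norm_num))) (t _ _ _ (by norm_num))) (t _ _ _ (by norm_num))) (t _ _ _ (by norm_num))) (t _ _ _ (by norm_num))) (t _ _ _ (by norm_num))) (t _ _ _ (by norm_num))) (t _ _ _ (by norm_num))) (t _ _ _ (by norm_num))) (t _ _ _ (by norm_num)))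
  linarith


lemma one_sub_sum_le_prod {ι : Type*} (s : Finset ι) (f : ι → ℝ)
    (h0 : ∀ i ∈ s, 0 ≤ f i) (h1 : ∀ i ∈ s, f i ≤ 1) :
    1 - ∑ i ∈ s, f i ≤ ∏ i ∈ s, (1 - f i) := by
  classical
  induction s using Finset.cons_induction with
  | empty => simp
  | cons a s ha ih =>
    rw [Finset.sum_cons, Finset.prod_cons]
    have h0a := h0 a (Finset.mem_cons_self a s)
    have h1a := h1 a (Finset.mem_cons_self a s)
    have ihs := ih (fun i hi => h0 i (Finset.mem_cons_of_mem hi))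
      (fun i hi => h1 i (Finset.mem_cons_of_mem hi))
    have hs0 : 0 ≤ ∑ i ∈ s, f i :=
      Finset.sum_nonneg (fun i hi => h0 i (Finset.mem_cons_of_mem hi))
    nlinarith [mul_le_mul_of_nonneg_left ihs (by linarith : (0:ℝ) ≤ 1 - f a)]

lemma prod_subset_le' {ι : Type*} {S T : Finset ι} (h : S ⊆ T) (f : ι → ℝ)
    (h0 : ∀ i ∈ T, 0 ≤ f i) (h1 : ∀ i ∈ T, f i ≤ 1) :
    ∏ i ∈ T, f i ≤ ∏ i ∈ S, f i := by
  classical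
  rw [← Finset.prod_sdiff h]
  have hle : ∏ i ∈ T \ S, f i ≤ 1 :=
    Finset.prod_le_one (fun i hi => h0 i (Finset.mem_sdiff.1 hi).1)
      (fun i hi => h1 i (Finset.mem_sdiff.1 hi).1)
  have hnn : 0 ≤ ∏ i ∈ S, f i :=
    Finset.prod_nonneg (fun i hi => h0 i (h hi))
  exact mul_le_of_le_one_left hnn hle

lemma tail_eq (x : ℝ) (M : ℕ) (hM : 4 ≤ M) :
    (1-x)^2 * (∑ m ∈ Finset.Icc 5 M, ((m:ℝ)+1)*x^m)
      + x^(M+1)*(((M:ℝ)+2)-((M:ℝ)+1)*x) = x^5*(6-5*x) := by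
  induction M, hM using Nat.le_induction with
  | base => rw [show Finset.Icc 5 4 = ∅ from Finset.Icc_eq_empty (by omega)]; push_cast; ring
  | succ M hM ih =>
    rw [Finset.sum_Icc_succ_top (by omega : 5 ≤ M + 1)]
    push_cast
    push_cast at ih
    linear_combination ih

lemma tail_le' {x : ℝ} (h0 : 0 ≤ x) (h1 : x ≤ 1/2) (M : ℕ) :
    ∑ m ∈ Finset.Icc 5 M, ((m:ℝ)+1)*x^m ≤ x^5*(6-5*x)/(1-x)^2 := by
  have hden : (0:ℝ) < (1-x)^2 := by nlinarith
  rcases lt_or_ge M 4 with hM | hM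
  · rw [show Finset.Icc 5 M = ∅ from Finset.Icc_eq_empty (by omega)]
    simp only [Finset.sum_empty]
    apply div_nonneg (mul_nonneg (pow_nonneg h0 5) (by linarith)) (by positivity)
  · have := tail_eq x M hM
    rw [le_div_iff₀ hden, mul_comm]
    have ht : 0 ≤ x^(M+1)*(((M:ℝ)+2)-((M:ℝ)+1)*x) := by
      apply mul_nonneg (pow_nonneg h0 _)
      have : ((M:ℝ)+1)*x ≤ ((M:ℝ)+1)*1 := by
        apply mul_le_mul_of_nonneg_left (by linarith) (by positivity)
      linarith
    linarith

lemma weight_sum_le {x : ℝ} (h0 : 0 ≤ x) (h1 : x ≤ 1/2) (S : Finset (ℕ×ℕ))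
    (hS : ∀ p ∈ S, 5 ≤ p.1 + p.2) :
    ∑ p ∈ S, x^(p.1+p.2) ≤ x^5*(6-5*x)/(1-x)^2 := by
  classical
  set M := S.sup (fun p => p.1+p.2) with hMdef
  have hmaps : ∀ p ∈ S, p.1+p.2 ∈ Finset.Icc 5 M := fun p hp =>
    Finset.mem_Icc.2 ⟨hS p hp, Finset.le_sup (f := fun p => p.1+p.2) hp⟩
  rw [← Finset.sum_fiberwise_of_maps_to hmaps (fun p => x^(p.1+p.2))]
  refine le_trans (Finset.sum_le_sum ?_) (tail_le' h0 h1 M)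
  intro m hm
  have hfib : ∀ p ∈ S.filter (fun p => p.1+p.2 = m), x^(p.1+p.2) = x^m := by
    intro p hp
    rw [(Finset.mem_filter.1 hp).2]
  rw [Finset.sum_congr rfl hfib, Finset.sum_const, nsmul_eq_mul]
  have hcard : (S.filter (fun p => p.1+p.2 = m)).card ≤ m + 1 := by
    have : S.filter (fun p => p.1+p.2 = m) ⊆ (Finset.range (m+1)).image (fun a => (a, m - a)) := by
      intro p hp
      obtain ⟨hpS, hpm⟩ := Finset.mem_filter.1 hp
      refine Finset.mem_image.2 ⟨p.1, Finset.mem_range.2 (by omega), ?_⟩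
      have : p.2 = m - p.1 := by omega
      rw [← this]
    calc (S.filter (fun p => p.1+p.2 = m)).card ≤ _ := Finset.card_le_card this
      _ ≤ (Finset.range (m+1)).card := Finset.card_image_le
      _ = m + 1 := Finset.card_range _
  have hxm : (0:ℝ) ≤ x^m := pow_nonneg h0 m
  calc ((S.filter (fun p => p.1+p.2 = m)).card : ℝ) * x^m
      ≤ ((m:ℝ)+1) * x^m := by
        apply mul_le_mul_of_nonneg_right _ hxm
        exact_mod_cast hcard

lemma prodLB {x : ℝ} (h0 : 0 ≤ x) (h1 : x ≤ 1/2) (S : Finset (ℕ×ℕ)) (hS : (0,0) ∉ S) :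
    (1-x)^5*(1-x^2)*(1-x^3) ≤ ∏ p ∈ S, (1 - x^(p.1+p.2)) := by
  classical
  have hx1 : x < 1 := by linarith
  have hfac0 : ∀ p : ℕ×ℕ, (0:ℝ) ≤ 1 - x^(p.1+p.2) := fun p => by
    have := pow_le_one₀ h0 (le_of_lt hx1) (n := p.1+p.2); linarith
  have hfac1 : ∀ p : ℕ×ℕ, (1 - x^(p.1+p.2)) ≤ 1 := fun p => by
    have := pow_nonneg h0 (p.1+p.2); linarith
  rw [← Finset.prod_filter_mul_prod_filter_not S (fun p => p.1+p.2 ≤ 4)]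
  set E : Finset (ℕ×ℕ) := {(1,0),(0,1),(2,0),(1,1),(0,2),(3,0),(2,1),(1,2),(0,3),(4,0),(3,1),(2,2),(1,3),(0,4)} with hE
  have hsub : S.filter (fun p => p.1+p.2 ≤ 4) ⊆ E := by
    intro p hp
    obtain ⟨hpS, hpw⟩ := Finset.mem_filter.1 hp
    have hne : p ≠ (0,0) := fun h => hS (h ▸ hpS)
    obtain ⟨a,b⟩ := p
    have hne' : ¬(a = 0 ∧ b = 0) := by
      intro ⟨h1,h2⟩; exact hne (by simp [h1,h2])
    simp only [hE, Finset.mem_insert, Finset.mem_singleton, Prod.mk.injEq]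
    omega
  have hEprod : ∏ p ∈ E, (1 - x^(p.1+p.2)) = (1-x)^2*(1-x^2)^3*(1-x^3)^4*(1-x^4)^5 := by
    rw [hE]
    rw [Finset.prod_insert (by decide), Finset.prod_insert (by decide), Finset.prod_insert (by decide), Finset.prod_insert (by decide), Finset.prod_insert (by decide), Finset.prod_insert (by decide), Finset.prod_insert (by decide), Finset.prod_insert (by decide), Finset.prod_insert (by decide), Finset.prod_insert (by decide), Finset.prod_insert (by decide), Finset.prod_insert (by decide), Finset.prod_insert (by decide), Finset.prod_singleton]
    norm_num
    ring
  have hsmall : (1-x)^2*(1-x^2)^3*(1-x^3)^4*(1-x^4)^5 ≤ ∏ p ∈ S.filter (fun p => p.1+p.2 ≤ 4), (1 - x^(p.1+p.2)) := by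
    rw [← hEprod]
    exact prod_subset_le' hsub _ (fun p _ => hfac0 p) (fun p _ => hfac1 p)
  have hbig : 1 - x^5*(6-5*x)/(1-x)^2 ≤ ∏ p ∈ S.filter (fun p => ¬ p.1+p.2 ≤ 4), (1 - x^(p.1+p.2)) := by
    refine le_trans ?_ (one_sub_sum_le_prod _ _ (fun p _ => pow_nonneg h0 _)
      (fun p _ => pow_le_one₀ h0 (le_of_lt hx1)))
    have := weight_sum_le h0 h1 (S.filter (fun p => ¬ p.1+p.2 ≤ 4))
      (fun p hp => by have := (Finset.mem_filter.1 hp).2; omega)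
    linarith
  have hbig0 : (0:ℝ) ≤ ∏ p ∈ S.filter (fun p => ¬ p.1+p.2 ≤ 4), (1 - x^(p.1+p.2)) :=
    Finset.prod_nonneg (fun p _ => hfac0 p)
  have hsmall0 : (0:ℝ) ≤ (1-x)^2*(1-x^2)^3*(1-x^3)^4*(1-x^4)^5 := by
    have e1 : (0:ℝ) ≤ 1-x := by linarith
    have e2 : (0:ℝ) ≤ 1-x^2 := by have := pow_le_one₀ h0 hx1.le (n:=2); linarith
    have e3 : (0:ℝ) ≤ 1-x^3 := by have := pow_le_one₀ h0 hx1.le (n:=3); linarith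
    have e4 : (0:ℝ) ≤ 1-x^4 := by have := pow_le_one₀ h0 hx1.le (n:=4); linarith
    exact mul_nonneg (mul_nonneg (mul_nonneg (pow_nonneg e1 2) (pow_nonneg e2 3)) (pow_nonneg e3 4)) (pow_nonneg e4 5)
  have hden : (0:ℝ) < (1-x)^2 := by nlinarith
  have key : (1-x)^5*(1-x^2)*(1-x^3) ≤ ((1-x)^2*(1-x^2)^3*(1-x^3)^4*(1-x^4)^5) * (1 - x^5*(6-5*x)/(1-x)^2) := by
    have hc := polyCert h0 h1
    rw [show (1:ℝ) - x^5*(6-5*x)/(1-x)^2 = ((1-x)^2 - x^5*(6-5*x))/(1-x)^2 from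
      (by rw [sub_div, div_self hden.ne'] :
        ((1-x)^2 - x^5*(6-5*x))/(1-x)^2 = 1 - x^5*(6-5*x)/(1-x)^2).symm,
      ← mul_div_assoc, le_div_iff₀ hden]
    calc (1-x)^5*(1-x^2)*(1-x^3)*(1-x)^2 = (1-x)^7*(1-x^2)*(1-x^3) := by ring
      _ ≤ _ := hc
  calc (1-x)^5*(1-x^2)*(1-x^3)
      ≤ ((1-x)^2*(1-x^2)^3*(1-x^3)^4*(1-x^4)^5) * (1 - x^5*(6-5*x)/(1-x)^2) := key
    _ ≤ ((1-x)^2*(1-x^2)^3*(1-x^3)^4*(1-x^4)^5) * ∏ p ∈ S.filter (fun p => ¬ p.1+p.2 ≤ 4), (1 - x^(p.1+p.2)) :=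
        mul_le_mul_of_nonneg_left hbig hsmall0
    _ ≤ (∏ p ∈ S.filter (fun p => p.1+p.2 ≤ 4), (1 - x^(p.1+p.2))) * ∏ p ∈ S.filter (fun p => ¬ p.1+p.2 ≤ 4), (1 - x^(p.1+p.2)) :=
        mul_le_mul_of_nonneg_right hsmall hbig0

noncomputable def Wfun (x : ℝ) (g : (ℕ × ℕ) →₀ ℕ) : ℝ :=
  if g (0,0) = 0 then x ^ (g.sum fun p k => (p.1 + p.2) * k) else 0

lemma Wfun_nonneg {x : ℝ} (h0 : 0 ≤ x) (g : (ℕ × ℕ) →₀ ℕ) : 0 ≤ Wfun x g := by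
  unfold Wfun; split
  · exact pow_nonneg h0 _
  · exact le_refl 0

lemma Cpos {x : ℝ} (h0 : 0 ≤ x) (h1 : x ≤ 1/2) : (0:ℝ) < (1-x)^5*(1-x^2)*(1-x^3) := by
  have e1 : (0:ℝ) < 1-x := by linarith
  have e2 : (0:ℝ) < 1-x^2 := by nlinarith
  have e3 : (0:ℝ) < 1-x^3 := by nlinarith
  positivity

set_option maxHeartbeats 2000000 in
lemma Wfun_sum_le {x : ℝ} (h0 : 0 < x) (h1 : x ≤ 1/2) (T : Finset ((ℕ×ℕ) →₀ ℕ)) :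
    ∑ g ∈ T, Wfun x g ≤ ((1-x)^5*(1-x^2)*(1-x^3))⁻¹ := by
  classical
  have hC0 := Cpos h0.le h1
  set T' := T.filter (fun g => g (0,0) = 0) with hT'
  have step0 : ∑ g ∈ T, Wfun x g = ∑ g ∈ T', Wfun x g := by
    rw [← Finset.sum_filter_add_sum_filter_not T (fun g => g (0,0) = 0)]
    have : ∑ g ∈ T.filter (fun g => ¬ g (0,0) = 0), Wfun x g = 0 :=
      Finset.sum_eq_zero (fun g hg => if_neg (Finset.mem_filter.1 hg).2)
    rw [this, add_zero]
  rw [step0]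
  set S := T'.sup Finsupp.support with hSdef
  have hsupp : ∀ g ∈ T', g.support ⊆ S := fun g hg => Finset.le_sup hg
  have hS00 : (0,0) ∉ S := by
    intro h
    obtain ⟨g, hg, hmem⟩ := Finset.mem_sup.1 h
    exact (Finsupp.mem_support_iff.1 hmem) (Finset.mem_filter.1 hg).2
  set K := T'.sup (fun g => g.sum fun _ k => k) with hKdef
  have hval : ∀ g ∈ T', ∀ p, g p < K + 1 := by
    intro g hg p
    have h1' : g p ≤ g.sum fun _ k => k := by
      by_cases hp : p ∈ g.support
      · exact Finset.single_le_sum (f := fun p => g p) (fun i _ => Nat.zero_le _) hp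
      · simp [Finsupp.notMem_support_iff.1 hp]
    have h2' : (g.sum fun _ k => k) ≤ K := Finset.le_sup (f := fun g => g.sum fun _ k => k) hg
    omega
  have hW : ∀ g ∈ T', Wfun x g = ∏ p ∈ S, x ^ ((p.1+p.2) * g p) := by
    intro g hg
    rw [Wfun, if_pos (Finset.mem_filter.1 hg).2,
      Finsupp.sum_of_support_subset g (hsupp g hg) _ (fun i _ => by simp)]
    exact (Finset.prod_pow_eq_pow_sum S _ x).symm
  rw [Finset.sum_congr rfl hW]
  set Φ : ((ℕ×ℕ) →₀ ℕ) → (∀ p : ℕ×ℕ, p ∈ S → ℕ) := fun g => fun p _ => g p with hΦ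
  have hinj : ∀ g ∈ T', ∀ g' ∈ T', Φ g = Φ g' → g = g' := by
    intro g hg g' hg' he
    ext p
    by_cases hp : p ∈ S
    · exact congrFun (congrFun he p) hp
    · rw [Finsupp.notMem_support_iff.1 (fun hmem => hp (hsupp g hg hmem)),
          Finsupp.notMem_support_iff.1 (fun hmem => hp (hsupp g' hg' hmem))]
  calc ∑ g ∈ T', ∏ p ∈ S, x^((p.1+p.2) * g p)
      = ∑ φ ∈ T'.image Φ, ∏ p ∈ S.attach, x^((p.1.1+p.1.2) * φ p.1 p.2) := by
        rw [Finset.sum_image hinj]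
        exact Finset.sum_congr rfl (fun g hg => (Finset.prod_attach S _).symm)
    _ ≤ ∑ φ ∈ S.pi (fun _ => Finset.range (K+1)), ∏ p ∈ S.attach, x^((p.1.1+p.1.2) * φ p.1 p.2) := by
        apply Finset.sum_le_sum_of_subset_of_nonneg
        · intro φ hφ
          obtain ⟨g, hg, rfl⟩ := Finset.mem_image.1 hφ
          exact Finset.mem_pi.2 (fun p hp => Finset.mem_range.2 (hval g hg p))
        · intro φ _ _
          exact Finset.prod_nonneg (fun p _ => pow_nonneg h0.le _)
    _ = ∏ p ∈ S, ∑ k ∈ Finset.range (K+1), x^((p.1+p.2) * k) :=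
        (Finset.prod_sum S (fun _ => Finset.range (K+1)) (fun p k => x ^ ((p.1+p.2)*k))).symm
    _ ≤ ∏ p ∈ S, (1 - x^(p.1+p.2))⁻¹ := by
        apply Finset.prod_le_prod
        · intro p _
          exact Finset.sum_nonneg fun k _ => pow_nonneg h0.le _
        · intro p hp
          have hw : 1 ≤ p.1 + p.2 := by
            by_contra hcon
            apply hS00
            have hp00 : p = (0,0) := by
              obtain ⟨a,b⟩ := p
              have : a = 0 ∧ b = 0 := by omega
              simp [this.1, this.2]
            rwa [hp00] at hp
          have hr1 : x^(p.1+p.2) < 1 := by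
            calc x^(p.1+p.2) ≤ x^1 := pow_le_pow_of_le_one h0.le (by linarith) hw
              _ < 1 := by linarith
          have hr0 : (0:ℝ) ≤ x^(p.1+p.2) := pow_nonneg h0.le _
          have hcongr : ∀ k ∈ Finset.range (K+1), x^((p.1+p.2)*k) = (x^(p.1+p.2))^k :=
            fun k _ => by rw [pow_mul]
          rw [Finset.sum_congr rfl hcongr]
          set r := x^(p.1+p.2) with hr
          have hgeom := geom_sum_eq (ne_of_lt hr1) (K+1)
          rw [hgeom, show (r^(K+1) - 1)/(r-1) = (1 - r^(K+1))/(1-r) from by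
            rw [div_eq_div_iff (by linarith) (by linarith)]; ring]
          have hrk : (0:ℝ) ≤ r^(K+1) := pow_nonneg hr0 _
          rw [inv_eq_one_div]
          gcongr
          · linarith
    _ = (∏ p ∈ S, (1 - x^(p.1+p.2)))⁻¹ := by rw [Finset.prod_inv_distrib]
    _ ≤ ((1-x)^5*(1-x^2)*(1-x^3))⁻¹ :=
        inv_anti₀ hC0 (prodLB h0.le h1 S hS00)

lemma Wfun_summable {x : ℝ} (h0 : 0 < x) (h1 : x ≤ 1/2) : Summable (Wfun x) :=
  summable_of_sum_le (fun g => Wfun_nonneg h0.le g) (fun T => Wfun_sum_le h0 h1 T)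

lemma Wfun_tsum_le {x : ℝ} (h0 : 0 < x) (h1 : x ≤ 1/2) :
    ∑' g, Wfun x g ≤ ((1-x)^5*(1-x^2)*(1-x^3))⁻¹ :=
  Summable.tsum_le_of_sum_le (Wfun_summable h0 h1) (fun T => Wfun_sum_le h0 h1 T)

lemma zterm_eq {q : ℝ} (hq : 2 ≤ q) (f : (ℕ × ℕ) →₀ ℕ) :
    (∏ p ∈ f.support, ((1:ℝ) / q ^ ((p.1 + 1) + p.2)) ^ (f p))
      = (1/q)^(f.sum fun _ k => k) * Wfun (1/q) (f.erase (0,0)) := by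
  have hq0 : (0:ℝ) < q := by linarith
  have h1 : (∏ p ∈ f.support, ((1:ℝ) / q ^ ((p.1 + 1) + p.2)) ^ (f p))
      = (1/q) ^ (f.sum fun p k => ((p.1+1)+p.2) * k) := by
    rw [Finsupp.sum, ← Finset.prod_pow_eq_pow_sum]
    apply Finset.prod_congr rfl
    intro p _
    rw [pow_mul, one_div, one_div, ← inv_pow]
  have h2 : (f.sum fun p k => ((p.1+1)+p.2) * k)
      = (f.sum fun _ k => k) + ((f.erase (0,0)).sum fun p k => (p.1+p.2) * k) := by
    have ha : (f.sum fun p k => ((p.1+1)+p.2) * k)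
        = (f.sum fun _ k => k) + (f.sum fun p k => (p.1+p.2) * k) := by
      rw [Finsupp.sum, Finsupp.sum, Finsupp.sum, ← Finset.sum_add_distrib]
      exact Finset.sum_congr rfl fun p _ => by ring
    have hb : ((f.erase (0,0)).sum fun p k => (p.1+p.2) * k)
        = (f.sum fun p k => (p.1+p.2) * k) := by
      calc ((f.erase (0,0)).sum fun p k => (p.1+p.2)*k)
          = ∑ p ∈ f.support.erase (0,0), (p.1+p.2) * (f.erase (0,0)) p := by
            rw [Finsupp.sum, Finsupp.support_erase]
        _ = ∑ p ∈ f.support.erase (0,0), (p.1+p.2) * f p :=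
            Finset.sum_congr rfl (fun p hp => by rw [Finsupp.erase_ne (Finset.ne_of_mem_erase hp)])
        _ = ∑ p ∈ f.support, (p.1+p.2) * f p := Finset.sum_erase _ (by simp)
        _ = f.sum fun p k => (p.1+p.2)*k := rfl
    rw [ha, ← hb]
  rw [h1, h2, pow_add, Wfun, if_pos (Finsupp.erase_same)]

lemma erase_inj_on_sum (n : ℕ) : ∀ f g : (ℕ × ℕ) →₀ ℕ, (f.sum fun _ k => k) = n →
    (g.sum fun _ k => k) = n → f.erase (0,0) = g.erase (0,0) → f = g := by
  intro f g hf hg he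
  have hsum : ∀ h : (ℕ × ℕ) →₀ ℕ, (h.sum fun _ k => k)
      = h (0,0) + ((h.erase (0,0)).sum fun _ k => k) := by
    intro h
    conv_lhs => rw [← Finsupp.single_add_erase (0,0) h]
    rw [Finsupp.sum_add_index' (fun _ => rfl) (fun _ _ _ => rfl),
      Finsupp.sum_single_index rfl]
  have h1 := hsum f; have h2 := hsum g
  have h00 : f (0,0) = g (0,0) := by rw [he] at h1; omega
  calc f = Finsupp.single (0,0) (f (0,0)) + f.erase (0,0) := (Finsupp.single_add_erase _ _).symm
    _ = Finsupp.single (0,0) (g (0,0)) + g.erase (0,0) := by rw [h00, he]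
    _ = g := Finsupp.single_add_erase _ _

lemma zCoeff_eq {q : ℝ} (hq : 2 ≤ q) (n : ℕ) :
    (∑' f : {f : (ℕ × ℕ) →₀ ℕ // (f.sum fun _ k => k) = n},
      ∏ p ∈ (f : (ℕ × ℕ) →₀ ℕ).support,
        ((1 : ℝ) / q ^ ((p.1 + 1) + p.2)) ^ ((f : (ℕ × ℕ) →₀ ℕ) p))
    = (1/q)^n * ∑' a : {f : (ℕ × ℕ) →₀ ℕ // (f.sum fun _ k => k) = n},
        Wfun (1/q) ((a : (ℕ × ℕ) →₀ ℕ).erase (0,0)) := by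
  rw [← tsum_mul_left]
  apply tsum_congr
  intro a
  rw [zterm_eq hq, a.2]

lemma zCoeff_le_aux {q : ℝ} (hq : 2 ≤ q) (n : ℕ) :
    (∑' f : {f : (ℕ × ℕ) →₀ ℕ // (f.sum fun _ k => k) = n},
      ∏ p ∈ (f : (ℕ × ℕ) →₀ ℕ).support,
        ((1 : ℝ) / q ^ ((p.1 + 1) + p.2)) ^ ((f : (ℕ × ℕ) →₀ ℕ) p))
    ≤ (1/q)^n * ((1-1/q)^5*(1-(1/q)^2)*(1-(1/q)^3))⁻¹ := by
  have hq0 : (0:ℝ) < q := by linarith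
  have hx0 : (0:ℝ) < 1/q := by positivity
  have hx2 : (1:ℝ)/q ≤ 1/2 := by
    rw [div_le_div_iff₀ hq0 (by norm_num)]; linarith
  rw [zCoeff_eq hq n]
  have hinj : Function.Injective
      (fun a : {f : (ℕ × ℕ) →₀ ℕ // (f.sum fun _ k => k) = n} =>
        (a : (ℕ × ℕ) →₀ ℕ).erase (0,0)) := by
    intro a b h
    exact Subtype.ext (erase_inj_on_sum n _ _ a.2 b.2 h)
  have hsummable := (Wfun_summable hx0 hx2).comp_injective hinj
  apply mul_le_mul_of_nonneg_left _ (le_of_lt (pow_pos hx0 n))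
  calc (∑' a : {f : (ℕ × ℕ) →₀ ℕ // (f.sum fun _ k => k) = n},
        Wfun (1/q) ((a : (ℕ × ℕ) →₀ ℕ).erase (0,0)))
      ≤ ∑' g, Wfun (1/q) g :=
        Summable.tsum_le_tsum_of_inj _ hinj (fun c _ => Wfun_nonneg hx0.le c)
          (fun a => le_rfl) hsummable (Wfun_summable hx0 hx2)
    _ ≤ ((1-1/q)^5*(1-(1/q)^2)*(1-(1/q)^3))⁻¹ := Wfun_tsum_le hx0 hx2

lemma zCoeff_pos_aux {q : ℝ} (hq : 2 ≤ q) (n : ℕ) :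
    (1/q)^n ≤ (∑' f : {f : (ℕ × ℕ) →₀ ℕ // (f.sum fun _ k => k) = n},
      ∏ p ∈ (f : (ℕ × ℕ) →₀ ℕ).support,
        ((1 : ℝ) / q ^ ((p.1 + 1) + p.2)) ^ ((f : (ℕ × ℕ) →₀ ℕ) p)) := by
  have hq0 : (0:ℝ) < q := by linarith
  have hx0 : (0:ℝ) < 1/q := by positivity
  have hx2 : (1:ℝ)/q ≤ 1/2 := by
    rw [div_le_div_iff₀ hq0 (by norm_num)]; linarith
  rw [zCoeff_eq hq n]
  have hinj : Function.Injective
      (fun a : {f : (ℕ × ℕ) →₀ ℕ // (f.sum fun _ k => k) = n} =>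
        (a : (ℕ × ℕ) →₀ ℕ).erase (0,0)) := by
    intro a b h
    exact Subtype.ext (erase_inj_on_sum n _ _ a.2 b.2 h)
  have hsummable := (Wfun_summable hx0 hx2).comp_injective hinj
  have ha0 : ((Finsupp.single ((0:ℕ),(0:ℕ)) n).sum fun _ k => k) = n :=
    Finsupp.sum_single_index rfl
  set a0 : {f : (ℕ × ℕ) →₀ ℕ // (f.sum fun _ k => k) = n} := ⟨Finsupp.single (0,0) n, ha0⟩
  have hterm : Wfun (1/q) ((a0 : (ℕ × ℕ) →₀ ℕ).erase (0,0)) = 1 := by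
    show Wfun (1/q) ((Finsupp.single ((0:ℕ),(0:ℕ)) n).erase (0,0)) = 1
    rw [Finsupp.erase_single, Wfun]
    simp
  have hle := Summable.le_tsum hsummable a0 (fun b _ => Wfun_nonneg hx0.le _)
  simp only [Function.comp] at hle
  rw [hterm] at hle
  calc (1/q)^n = (1/q)^n * 1 := (mul_one _).symm
    _ ≤ _ := mul_le_mul_of_nonneg_left hle (le_of_lt (pow_pos hx0 n))

section PartFacts
variable {n : ℕ} (l : n.Partition)

lemma parts_le {p : ℕ} (hp : p ∈ l.parts) : p ≤ n :=
  (Multiset.le_sum_of_mem hp).trans_eq l.parts_sum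

lemma card_parts_le : Multiset.card l.parts ≤ n := by
  have h := Multiset.card_nsmul_le_sum (fun x hx => l.parts_pos hx)
  simpa [l.parts_sum] using h

lemma conjPart_le (j : ℕ) : conjPart l j ≤ n :=
  (Multiset.countP_le_card _ _).trans (card_parts_le l)

lemma conjPart_anti {j j' : ℕ} (h : j ≤ j') : conjPart l j' ≤ conjPart l j := by
  unfold conjPart
  rw [Multiset.countP_eq_card_filter, Multiset.countP_eq_card_filter]
  exact Multiset.card_le_card (Multiset.monotone_filter_right _ (fun p hp => le_trans h hp))

lemma transpose {j : ℕ} (hj1 : 1 ≤ j) (hjn : j ≤ n) (i : ℕ) :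
    j ≤ rowLen l i ↔ i ≤ conjPart l j := by
  constructor
  · intro h
    by_contra hcon
    push_neg at hcon
    have hsub : (Finset.Icc 1 n).filter (fun j' => i ≤ conjPart l j') ⊆ Finset.Icc 1 (j-1) := by
      intro j' hj'
      obtain ⟨hj'n, hj'c⟩ := Finset.mem_filter.1 hj'
      rw [Finset.mem_Icc] at hj'n ⊢
      refine ⟨hj'n.1, ?_⟩
      by_contra hc2
      push_neg at hc2
      have : conjPart l j' ≤ conjPart l j := conjPart_anti l (by omega)
      omega
    have := Finset.card_le_card hsub
    rw [Nat.card_Icc] at this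
    unfold rowLen at h
    omega
  · intro h
    have hsub : Finset.Icc 1 j ⊆ (Finset.Icc 1 n).filter (fun j' => i ≤ conjPart l j') := by
      intro j' hj'
      rw [Finset.mem_Icc] at hj'
      refine Finset.mem_filter.2 ⟨Finset.mem_Icc.2 ⟨hj'.1, hj'.2.trans hjn⟩, ?_⟩
      exact le_trans h (conjPart_anti l hj'.2)
    have := Finset.card_le_card hsub
    rw [Nat.card_Icc] at this
    unfold rowLen
    omega

lemma rowLen_le (i : ℕ) : rowLen l i ≤ n := by
  unfold rowLen
  have := Finset.card_filter_le (Finset.Icc 1 n) (fun j => i ≤ conjPart l j)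
  rwa [Nat.card_Icc, Nat.add_sub_cancel] at this

lemma sum_conjPart : ∑ j ∈ Finset.Icc 1 n, conjPart l j = n := by
  have key : ∀ s : Multiset ℕ, (∀ p ∈ s, 1 ≤ p ∧ p ≤ n) →
      ∑ j ∈ Finset.Icc 1 n, Multiset.countP (fun p => j ≤ p) s = s.sum := by
    intro s
    induction s using Multiset.induction with
    | empty => simp
    | cons a s ih =>
      intro hmem
      have ha := hmem a (Multiset.mem_cons_self a s)
      have hs := fun p hp => hmem p (Multiset.mem_cons_of_mem hp)
      simp only [Multiset.countP_cons, Multiset.sum_cons]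
      rw [Finset.sum_add_distrib, ih hs]
      have hfil : (Finset.Icc 1 n).filter (fun j => j ≤ a) = Finset.Icc 1 a := by
        ext j
        simp only [Finset.mem_filter, Finset.mem_Icc]
        omega
      have : ∑ j ∈ Finset.Icc 1 n, (if j ≤ a then 1 else 0) = a := by
        rw [Finset.sum_boole, hfil, Nat.card_Icc]
        simp
      omega
  have := key l.parts (fun p hp => ⟨l.parts_pos hp, parts_le l hp⟩)
  rw [l.parts_sum] at this
  exact this

end PartFacts

section PartFacts2
variable {n : ℕ} (l : n.Partition)

lemma rowLen_eq_sum (i : ℕ) :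
    rowLen l i = ∑ j ∈ Finset.Icc 1 n, (if i ≤ conjPart l j then 1 else 0) := by
  unfold rowLen
  rw [Finset.sum_boole]
  simp

lemma sum_rowLen : ∑ i ∈ Finset.Icc 1 n, rowLen l i = n := by
  have : ∑ i ∈ Finset.Icc 1 n, rowLen l i
      = ∑ j ∈ Finset.Icc 1 n, ∑ i ∈ Finset.Icc 1 n, (if i ≤ conjPart l j then 1 else 0) := by
    rw [← Finset.sum_comm]
    exact Finset.sum_congr rfl (fun i _ => rowLen_eq_sum l i)
  rw [this]
  have hinner : ∀ j ∈ Finset.Icc 1 n,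
      ∑ i ∈ Finset.Icc 1 n, (if i ≤ conjPart l j then 1 else 0) = conjPart l j := by
    intro j _
    have hfil : (Finset.Icc 1 n).filter (fun i => i ≤ conjPart l j) = Finset.Icc 1 (conjPart l j) := by
      ext i
      have := conjPart_le l j
      simp only [Finset.mem_filter, Finset.mem_Icc]
      omega
    rw [Finset.sum_boole, hfil, Nat.card_Icc]
    simp
  rw [Finset.sum_congr rfl hinner, sum_conjPart]

lemma sq_Icc (c : ℕ) : ∑ i ∈ Finset.Icc 1 c, (2*(i-1)+1) = c^2 := by
  induction c with
  | zero => simp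
  | succ c ih =>
    rw [Finset.sum_Icc_succ_top (by omega : 1 ≤ c + 1), ih]
    ring_nf
    omega

lemma sq_sum : ∑ j ∈ Finset.Icc 1 n, (conjPart l j)^2 = n + 2 * nStat l := by
  have hsq : ∀ j ∈ Finset.Icc 1 n, (conjPart l j)^2
      = ∑ i ∈ Finset.Icc 1 n, (if i ≤ conjPart l j then 2*(i-1)+1 else 0) := by
    intro j _
    rw [← sq_Icc (conjPart l j)]
    rw [← Finset.sum_filter]
    congr 1
    ext i
    have := conjPart_le l j
    simp only [Finset.mem_filter, Finset.mem_Icc]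
    omega
  rw [Finset.sum_congr rfl hsq, Finset.sum_comm]
  have hinner : ∀ i ∈ Finset.Icc 1 n,
      ∑ j ∈ Finset.Icc 1 n, (if i ≤ conjPart l j then 2*(i-1)+1 else 0)
      = (2*(i-1)+1) * rowLen l i := by
    intro i _
    rw [rowLen_eq_sum l i, Finset.mul_sum]
    apply Finset.sum_congr rfl
    intro j _
    split <;> simp
  rw [Finset.sum_congr rfl hinner]
  have : ∑ i ∈ Finset.Icc 1 n, (2*(i-1)+1) * rowLen l i
      = 2 * ∑ i ∈ Finset.Icc 1 n, (i-1) * rowLen l i + ∑ i ∈ Finset.Icc 1 n, rowLen l i := by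
    rw [Finset.mul_sum, ← Finset.sum_add_distrib]
    apply Finset.sum_congr rfl
    intro i _
    ring
  rw [this, sum_rowLen, nStat]
  omega

lemma countP_split (j : ℕ) (s : Multiset ℕ) :
    Multiset.countP (fun p => j ≤ p) s
      = Multiset.count j s + Multiset.countP (fun p => j+1 ≤ p) s := by
  induction s using Multiset.induction with
  | empty => simp
  | cons a s ih =>
    simp only [Multiset.countP_cons, Multiset.count_cons, ih]
    split_ifs <;> omega

lemma mult_add_conj (j : ℕ) : conjPart l j = mult l j + conjPart l (j+1) :=
  countP_split j l.parts

end PartFacts2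

section Hook
variable {n : ℕ} (l : n.Partition)

lemma mem_parts_facts {j : ℕ} (hj : 1 ≤ mult l j) : 1 ≤ j ∧ j ≤ n := by
  have hmem : j ∈ l.parts := Multiset.count_pos.1 hj
  exact ⟨l.parts_pos hmem, parts_le l hmem⟩

lemma mult_le_conj (j : ℕ) : mult l j ≤ conjPart l j := by
  have := mult_add_conj l j
  omega

lemma hook_cell_facts {j k : ℕ} (hk1 : 1 ≤ k) (hk2 : k ≤ mult l j) :
    (conjPart l j + 1 - k, j) ∈ cells l ∧ hookLen l (conjPart l j + 1 - k, j) = k := by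
  obtain ⟨hj1, hjn⟩ := mem_parts_facts l (le_trans hk1 hk2)
  have hmc := mult_le_conj l j
  have hcle := conjPart_le l j
  set i := conjPart l j + 1 - k with hi
  have hik : k ≤ conjPart l j := le_trans hk2 hmc
  have hi1 : 1 ≤ i := by omega
  have hile : i ≤ conjPart l j := by omega
  have hilen : i ≤ n := by omega
  have hadd := mult_add_conj l j
  have hbig : conjPart l (j+1) < i := by omega
  have hrow_ge : j ≤ rowLen l i := (transpose l hj1 hjn i).2 hile
  have hrow_le : rowLen l i ≤ j := by
    rcases eq_or_lt_of_le hjn with heq | hlt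
    · rw [heq]; exact rowLen_le l i
    · by_contra hcon
      push_neg at hcon
      have : i ≤ conjPart l (j+1) := (transpose l (by omega) (by omega) i).1 (by omega)
      omega
  have hrow : rowLen l i = j := le_antisymm hrow_le hrow_ge
  constructor
  · unfold cells
    refine Finset.mem_filter.2 ⟨Finset.mem_product.2 ⟨?_, ?_⟩, ?_⟩
    · exact Finset.mem_Icc.2 ⟨hi1, hilen⟩
    · exact Finset.mem_Icc.2 ⟨hj1, hjn⟩
    · exact hrow_ge
  · unfold hookLen arm leg
    simp only []
    rw [hrow]
    omega

lemma hookLen_pos (s : ℕ × ℕ) : 1 ≤ hookLen l s := by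
  unfold hookLen; omega

end Hook

section HookProd
variable {q : ℝ} {n : ℕ} (l : n.Partition)

lemma one_sub_inv_pow_mem (hq : 2 ≤ q) {k : ℕ} (hk : 1 ≤ k) :
    (0:ℝ) < 1 - 1/q^k ∧ (1 - 1/q^k) ≤ 1 := by
  have hq0 : (0:ℝ) < q := by linarith
  have h1 : (1:ℝ) ≤ q^k := one_le_pow₀ (by linarith)
  have h2 : (0:ℝ) < q^k := pow_pos hq0 k
  have h3 : 1/q^k ≤ 1/q^1 := by
    have hpow : q^1 ≤ q^k := pow_le_pow_right₀ (by linarith) hk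
    exact one_div_le_one_div_of_le (by positivity) hpow
  constructor
  · have : (1:ℝ)/q^1 ≤ 1/2 := by
      rw [pow_one, div_le_div_iff₀ hq0 (by norm_num)]; linarith
    linarith
  · have : (0:ℝ) ≤ 1/q^k := by positivity
    linarith

lemma qPoch_pos (hq : 2 ≤ q) (m : ℕ) : 0 < qPoch q m :=
  Finset.prod_pos (fun k hk => (one_sub_inv_pow_mem hq (Finset.mem_Icc.1 hk).1).1)

lemma qPoch_le_one (hq : 2 ≤ q) (m : ℕ) : qPoch q m ≤ 1 :=
  Finset.prod_le_one (fun k hk => (one_sub_inv_pow_mem hq (Finset.mem_Icc.1 hk).1).1.le)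
    (fun k hk => (one_sub_inv_pow_mem hq (Finset.mem_Icc.1 hk).1).2)

lemma hook_le_M (hq : 2 ≤ q) :
    ∏ s ∈ cells l, (1 - 1/q^(hookLen l s)) ≤ ∏ j ∈ Finset.Icc 1 n, qPoch q (mult l j) := by
  classical
  set T : Finset ((_ : ℕ) × ℕ) := (Finset.Icc 1 n).sigma (fun j => Finset.Icc 1 (mult l j)) with hT
  have step1 : ∏ j ∈ Finset.Icc 1 n, qPoch q (mult l j) = ∏ t ∈ T, (1 - 1/q^t.2) := by
    rw [hT, Finset.prod_sigma]
    rfl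
  set ψ : ((_ : ℕ) × ℕ) → ℕ × ℕ := fun t => (conjPart l t.1 + 1 - t.2, t.1) with hψ
  have hmemT : ∀ t ∈ T, 1 ≤ t.2 ∧ t.2 ≤ mult l t.1 := by
    intro t ht
    obtain ⟨h1, h2⟩ := Finset.mem_sigma.1 ht
    exact ⟨(Finset.mem_Icc.1 h2).1, (Finset.mem_Icc.1 h2).2⟩
  have hinj : ∀ t ∈ T, ∀ t' ∈ T, ψ t = ψ t' → t = t' := by
    intro t ht t' ht' he
    obtain ⟨ha, hb⟩ := hmemT t ht
    obtain ⟨ha', hb'⟩ := hmemT t' ht'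
    have h2 : t.1 = t'.1 := congrArg Prod.snd he
    have h1 : conjPart l t.1 + 1 - t.2 = conjPart l t'.1 + 1 - t'.2 := congrArg Prod.fst he
    have hle1 : t.2 ≤ conjPart l t.1 := le_trans hb (mult_le_conj l t.1)
    have hle2 : t'.2 ≤ conjPart l t'.1 := le_trans hb' (mult_le_conj l t'.1)
    have : t.2 = t'.2 := by rw [h2] at h1 hle1; omega
    exact Sigma.ext h2 (by rw [this])
  have step2 : ∏ t ∈ T, ((1:ℝ) - 1/q^t.2) = ∏ s ∈ T.image ψ, (1 - 1/q^(hookLen l s)) := by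
    rw [Finset.prod_image hinj]
    apply Finset.prod_congr rfl
    intro t ht
    obtain ⟨ha, hb⟩ := hmemT t ht
    rw [(hook_cell_facts l ha hb).2]
  have hsub : T.image ψ ⊆ cells l := by
    intro s hs
    obtain ⟨t, ht, rfl⟩ := Finset.mem_image.1 hs
    obtain ⟨ha, hb⟩ := hmemT t ht
    exact (hook_cell_facts l ha hb).1
  rw [step1, step2]
  apply prod_subset_le' hsub
  · intro s _
    exact (one_sub_inv_pow_mem hq (hookLen_pos l s)).1.le
  · intro s _
    exact (one_sub_inv_pow_mem hq (hookLen_pos l s)).2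

end HookProd

-- real content
lemma zCoeff_le {q : ℝ} (hq : 2 ≤ q) (n : ℕ) :
    zCoeff n q ≤ (1/q)^n * ((1-1/q)^5*(1-(1/q)^2)*(1-(1/q)^3))⁻¹ := by
  rw [zCoeff]; exact zCoeff_le_aux hq n

lemma zCoeff_pos {q : ℝ} (hq : 2 ≤ q) (n : ℕ) : 0 < zCoeff n q := by
  rw [zCoeff]
  exact lt_of_lt_of_le (pow_pos (by positivity : (0:ℝ) < 1/q) n) (zCoeff_pos_aux hq n)

lemma Pden_eq {q : ℝ} {n : ℕ} (l : n.Partition) :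
    Pden q l = q^(n + 2*nStat l) * ∏ j ∈ Finset.Icc 1 n, qPoch q (mult l j) := by
  rw [Pden, Finset.prod_mul_distrib, Finset.prod_pow_eq_pow_sum, sq_sum]

lemma hook_sq_le {q : ℝ} {n : ℕ} (l : n.Partition) (hq : 2 ≤ q) :
    ∏ s ∈ cells l, (1 - 1/q^(hookLen l s))^2 ≤ ∏ j ∈ Finset.Icc 1 n, qPoch q (mult l j) := by
  have hH := hook_le_M l hq
  have hH1 : ∏ s ∈ cells l, (1 - 1/q^(hookLen l s)) ≤ 1 :=
    Finset.prod_le_one (fun s _ => (one_sub_inv_pow_mem hq (hookLen_pos l s)).1.le)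
      (fun s _ => (one_sub_inv_pow_mem hq (hookLen_pos l s)).2)
  have hH0 : (0:ℝ) ≤ ∏ s ∈ cells l, (1 - 1/q^(hookLen l s)) :=
    Finset.prod_nonneg (fun s _ => (one_sub_inv_pow_mem hq (hookLen_pos l s)).1.le)
  rw [Finset.prod_pow]
  nlinarith [hH, hH0, hH1]

lemma qPoch_eq_x {q : ℝ} (m : ℕ) : qPoch q m = ∏ k ∈ Finset.Icc 1 m, (1 - (1/q)^k) := by
  apply Finset.prod_congr rfl
  intro k _
  rw [one_div, one_div, inv_pow]

lemma poch_bound {q : ℝ} (hq : 2 ≤ q) (n : ℕ) (hn : 1 ≤ n) :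
    (1-(1/q)^n)*(1-1/q)^4 * qPoch q n ≤ (1-1/q)^5*(1-(1/q)^2)*(1-(1/q)^3) := by
  have hq0 : (0:ℝ) < q := by linarith
  set x := 1/q with hx
  have hx0 : (0:ℝ) < x := by positivity
  have hx2 : x ≤ 1/2 := by rw [hx, div_le_div_iff₀ hq0 (by norm_num)]; linarith
  have hx1 : x < 1 := by linarith
  have hfac : ∀ k : ℕ, 1 ≤ k → (0:ℝ) ≤ 1 - x^k ∧ (1 - x^k) ≤ 1 := by
    intro k hk
    have h1 : x^k ≤ 1 := pow_le_one₀ hx0.le hx1.le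
    have h2 : (0:ℝ) ≤ x^k := pow_nonneg hx0.le k
    exact ⟨by linarith, by linarith⟩
  have key : (1-x^n) * qPoch q n ≤ (1-x)*(1-x^2)*(1-x^3) := by
    have hxn1 : x^n ≤ 1 := pow_le_one₀ hx0.le hx1.le
    have hxn0 : (0:ℝ) ≤ x^n := pow_nonneg hx0.le n
    match n, hn with
    | 1, _ =>
      have h1 : qPoch q 1 = 1 - x := by
        rw [qPoch_eq_x, show Finset.Icc 1 1 = {1} from rfl, Finset.prod_singleton, pow_one]
      rw [h1, pow_one]
      have e0 : (0:ℝ) ≤ 1 - x^2*(1+x) := by nlinarith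
      have ehint : (0:ℝ) ≤ x*(1-x)*(1 - x^2*(1+x)) :=
        mul_nonneg (mul_nonneg hx0.le (by linarith)) e0
      have e1 : (1-x) ≤ (1-x^2)*(1-x^3) := by nlinarith [ehint]
      nlinarith [mul_le_mul_of_nonneg_left e1 (by linarith : (0:ℝ) ≤ 1-x)]
    | 2, _ =>
      have h1 : qPoch q 2 = (1-x)*(1-x^2) := by
        rw [qPoch_eq_x, show Finset.Icc 1 2 = {1,2} from rfl,
          Finset.prod_insert (by decide), Finset.prod_singleton, pow_one]
      rw [h1]
      have h2 : x^3 ≤ x^2 := pow_le_pow_of_le_one hx0.le hx1.le (by omega)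
      have e2 : (0:ℝ) ≤ 1-x^2 := by nlinarith
      nlinarith [mul_le_mul_of_nonneg_left (by linarith : (1-x^2:ℝ) ≤ 1-x^3)
        (mul_nonneg (by linarith : (0:ℝ) ≤ 1-x) e2)]
    | (m+3), _ =>
      have hsub : Finset.Icc 1 3 ⊆ Finset.Icc 1 (m+3) :=
        Finset.Icc_subset_Icc_right (by omega)
      have h1 : qPoch q (m+3) ≤ ∏ k ∈ Finset.Icc 1 3, (1 - x^k) := by
        rw [qPoch_eq_x]
        exact prod_subset_le' hsub _
          (fun k hk => (hfac k (Finset.mem_Icc.1 hk).1).1)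
          (fun k hk => (hfac k (Finset.mem_Icc.1 hk).1).2)
      have h2 : ∏ k ∈ Finset.Icc 1 3, (1 - x^k) = (1-x)*(1-x^2)*(1-x^3) := by
        rw [show Finset.Icc 1 3 = {1,2,3} from rfl, Finset.prod_insert (by decide),
          Finset.prod_insert (by decide), Finset.prod_singleton, pow_one]
        ring
      have h3 : (0:ℝ) < qPoch q (m+3) := qPoch_pos hq _
      calc (1-x^(m+3)) * qPoch q (m+3) ≤ 1 * qPoch q (m+3) := by nlinarith
        _ = qPoch q (m+3) := one_mul _
        _ ≤ (1-x)*(1-x^2)*(1-x^3) := h2 ▸ h1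
  have h40 : (0:ℝ) ≤ (1-x)^4 := by positivity
  calc (1-x^n)*(1-x)^4 * qPoch q n = (1-x)^4 * ((1-x^n) * qPoch q n) := by ring
    _ ≤ (1-x)^4 * ((1-x)*(1-x^2)*(1-x^3)) := mul_le_mul_of_nonneg_left key h40
    _ = (1-x)^5*(1-x^2)*(1-x^3) := by ring


end AuxProof

theorem stmt14 (q : ℝ) (hq : 2 ≤ q) (n : ℕ) (hn : 1 ≤ n) (l : n.Partition) :
    (1 - 1/q^n) * (1 - 1/q)^4 * Pmeas q l ≤ Qmeas q l := by
  have hq0 : (0:ℝ) < q := by linarith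
  have hx0 : (0:ℝ) < 1/q := by positivity
  set M := ∏ j ∈ Finset.Icc 1 n, qPoch q (mult l j) with hM
  set H2 := ∏ s ∈ cells l, (1 - 1/q^(hookLen l s))^2 with hH2
  set N := n + 2 * nStat l with hN
  have hMpos : 0 < M := Finset.prod_pos (fun j _ => qPoch_pos hq _)
  have hH2pos : 0 < H2 :=
    Finset.prod_pos (fun s _ => pow_pos (one_sub_inv_pow_mem hq (hookLen_pos l s)).1 2)
  have hZpos := zCoeff_pos hq n
  have hqN : (0:ℝ) < q^N := pow_pos hq0 N
  have hkey2 : H2 ≤ M := hook_sq_le l hq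
  have hCval : (0:ℝ) < (1-1/q)^5*(1-(1/q)^2)*(1-(1/q)^3) := by
    have h1 : (1:ℝ)/q ≤ 1/2 := by rw [div_le_div_iff₀ hq0 (by norm_num)]; linarith
    have e1 : (0:ℝ) < 1-1/q := by linarith
    have e2 : (0:ℝ) < 1-(1/q)^2 := by nlinarith
    have e3 : (0:ℝ) < 1-(1/q)^3 := by nlinarith
    positivity
  have hkey1 : (1 - 1/q^n) * (1 - 1/q)^4 * (q^n * qPoch q n) * zCoeff n q ≤ 1 := by
    have hc0 : (0:ℝ) ≤ (1 - 1/q^n) * (1 - 1/q)^4 * (q^n * qPoch q n) := by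
      have h1 : (0:ℝ) < 1 - 1/q^n := (one_sub_inv_pow_mem hq hn).1
      have h2 : (0:ℝ) ≤ (1-1/q)^4 := by positivity
      have := qPoch_pos hq n
      positivity
    calc (1 - 1/q^n) * (1 - 1/q)^4 * (q^n * qPoch q n) * zCoeff n q
        ≤ (1 - 1/q^n) * (1 - 1/q)^4 * (q^n * qPoch q n)
            * ((1/q)^n * ((1-1/q)^5*(1-(1/q)^2)*(1-(1/q)^3))⁻¹) :=
          mul_le_mul_of_nonneg_left (zCoeff_le hq n) hc0
      _ = ((1-(1/q)^n) * (1-1/q)^4 * qPoch q n) * (q^n * (1/q)^n)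
            * ((1-1/q)^5*(1-(1/q)^2)*(1-(1/q)^3))⁻¹ := by
          rw [one_div_pow]
          ring
      _ = ((1-(1/q)^n) * (1-1/q)^4 * qPoch q n)
            * ((1-1/q)^5*(1-(1/q)^2)*(1-(1/q)^3))⁻¹ := by
          rw [one_div, ← mul_pow, mul_inv_cancel₀ (ne_of_gt hq0), one_pow, mul_one]
      _ ≤ ((1-1/q)^5*(1-(1/q)^2)*(1-(1/q)^3))
            * ((1-1/q)^5*(1-(1/q)^2)*(1-(1/q)^3))⁻¹ :=
          mul_le_mul_of_nonneg_right (poch_bound hq n hn) (by positivity)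
      _ = 1 := mul_inv_cancel₀ (ne_of_gt hCval)
  -- final arithmetic
  rw [Pmeas, Qmeas, Pden_eq l, ← hM, ← hH2, ← hN]
  rw [div_mul_div_comm, one_mul, ← mul_div_assoc]
  rw [div_le_div_iff₀ (by positivity) (by positivity)]
  have hstep : (1 - 1/q^n) * (1 - 1/q)^4 * (q^n * qPoch q n) * zCoeff n q * H2 ≤ M := by
    calc (1 - 1/q^n) * (1 - 1/q)^4 * (q^n * qPoch q n) * zCoeff n q * H2
        ≤ 1 * H2 := mul_le_mul_of_nonneg_right hkey1 (le_of_lt hH2pos)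
      _ = H2 := one_mul _
      _ ≤ M := hkey2
  calc (1 - 1/q^n) * (1 - 1/q)^4 * (q^n * qPoch q n) * (zCoeff n q * (q^N * H2))
      = ((1 - 1/q^n) * (1 - 1/q)^4 * (q^n * qPoch q n) * zCoeff n q * H2) * q^N := by ring
    _ ≤ M * q^N := mul_le_mul_of_nonneg_right hstep (le_of_lt hqN)
    _ = 1 * (q^N * M) := by ring
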